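/- Let 𝒜 be a skeletally small abelian category and X an object of 𝒜 such that for every pre-subobject chain Δ of X the colimit colim Δ exists in 𝒜. Then the following are equivalent: (1) X is subobject cocomplete, i.e., for every pre-subobject chain Δ of X the induced morphism colim Δ → X is a monomorphism; (2) for every directed system {f_α : Y_α → Z_α} of morphisms in the subobject category Sub(X) (so each Y_α and Z_α is a subobject of X and f_α is the canonical inclusion), the colimit morphism colim f_α, computed in 𝒜, is a monomorphism; (3) for every directed system of short exact sequences 0 → Y_α → Z_α → W_α → 0 in 𝒜 whose monomorphisms form a directed system in Sub(X), the colimit colim W_α exists and the sequence 0 → colim Y_α → colim Z_α → colim W_α → 0 is exact. -/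

import Mathlib

open CategoryTheory CategoryTheory.Limits

universe w v u

namespace JHS

variable {𝒜 : Type u} [Category.{v} 𝒜] [Abelian 𝒜]

variable {X : 𝒜}

/-- The diagram in `𝒜` associated to a set of subobjects of `X`, given by the underlying
objects and the canonical inclusion monomorphisms between them. -/
@[simps]
noncomputable def chainDiagram (Δ : Set (Subobject X)) : Δ ⥤ 𝒜 where
  obj Y := (Y.1 : 𝒜)
  map {Y Z} f := Subobject.ofLE Y.1 Z.1 (leOfHom f)
  map_id Y := Subobject.ofLE_refl Y.1
  map_comp {Y Z W} f g := (Subobject.ofLE_comp_ofLE Y.1 Z.1 W.1 (leOfHom f) (leOfHom g)).symm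

/-- The cocone over the diagram of a set of subobjects of `X` with vertex an upper bound. -/
@[simps]
noncomputable def chainCocone (Δ : Set (Subobject X)) (W : Subobject X) (h : ∀ Y ∈ Δ, Y ≤ W) :
    Cocone (chainDiagram Δ) where
  pt := (W : 𝒜)
  ι :=
    { app := fun Y => Subobject.ofLE Y.1 W (h Y.1 Y.2)
      naturality := fun Y Z f => by
        simp [chainDiagram, Subobject.ofLE_comp_ofLE] }

/-- The cone over the diagram of a set of subobjects of `X` with vertex a lower bound. -/
@[simps]
noncomputable def chainCone (Δ : Set (Subobject X)) (W : Subobject X) (h : ∀ Y ∈ Δ, W ≤ Y) :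
    Cone (chainDiagram Δ) where
  pt := (W : 𝒜)
  π :=
    { app := fun Y => Subobject.ofLE W Y.1 (h Y.1 Y.2)
      naturality := fun Y Z f => by
        simp [chainDiagram, Subobject.ofLE_comp_ofLE] }

/-- `W` is the colimit of the chain `Δ` of subobjects of `X`, as a subobject of `X`:
the colimit of the diagram of inclusions exists and the induced morphism to `X` is a
monomorphism with image `W`.  Equivalently, the canonical cocone with vertex `W` is a
colimit cocone. -/
def IsColimSub (Δ : Set (Subobject X)) (W : Subobject X) : Prop :=
  ∃ h : ∀ Y ∈ Δ, Y ≤ W, Nonempty (IsColimit (chainCocone Δ W h))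

/-- `W` is the limit of the chain `Δ` of subobjects of `X` (such a limit is automatically a
subobject of `X`): the canonical cone with vertex `W` is a limit cone. -/
def IsLimSub (Δ : Set (Subobject X)) (W : Subobject X) : Prop :=
  ∃ h : ∀ Y ∈ Δ, W ≤ Y, Nonempty (IsLimit (chainCone Δ W h))

/-- A pre-subobject chain: a set of subobjects totally ordered under inclusion. -/
def IsPreChain (Δ : Set (Subobject X)) : Prop :=
  IsChain (· ≤ ·) Δ

/-- A subobject chain: a pre-subobject chain containing `⊥ = 0` and `⊤ = X`. -/
def IsSubChain (Δ : Set (Subobject X)) : Prop :=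
  IsPreChain Δ ∧ ⊥ ∈ Δ ∧ ⊤ ∈ Δ

/-- A chain is cocomplete if every subset has a colimit which is a subobject of `X` and
lies in the chain. -/
def Cocomplete (Δ : Set (Subobject X)) : Prop :=
  ∀ Δ' ⊆ Δ, ∃ W ∈ Δ, IsColimSub Δ' W

/-- A chain is complete if every subset has a limit which lies in the chain. -/
def Complete (Δ : Set (Subobject X)) : Prop :=
  ∀ Δ' ⊆ Δ, ∃ W ∈ Δ, IsLimSub Δ' W

/-- A chain is bicomplete if it is both cocomplete and complete. -/
def Bicomplete (Δ : Set (Subobject X)) : Prop :=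
  Cocomplete Δ ∧ Complete Δ

/-- `W = Y⁻_Δ` is the predecessor of `Y` in `Δ`: the colimit of `{Z ∈ Δ | Z ⊊ Y}`,
with the convention `0⁻_Δ = 0`. -/
def IsPred (Δ : Set (Subobject X)) (Y W : Subobject X) : Prop :=
  (Y = ⊥ ∧ W = ⊥) ∨ (Y ≠ ⊥ ∧ IsColimSub {Z | Z ∈ Δ ∧ Z < Y} W)

/-- `W = Y⁺_Δ` is the successor of `Y` in `Δ`: the limit of `{Z ∈ Δ | Y ⊊ Z}`,
with the convention `X⁺_Δ = X`. -/
def IsSucc (Δ : Set (Subobject X)) (Y W : Subobject X) : Prop :=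
  (Y = ⊤ ∧ W = ⊤) ∨ (Y ≠ ⊤ ∧ IsLimSub {Z | Z ∈ Δ ∧ Y < Z} W)

/-- The quotient (subfactor) `Y/W` of two nested subobjects of `X`: the cokernel of the
inclusion `W → Y`. -/
noncomputable def quot (W Y : Subobject X) (h : W ≤ Y) : 𝒜 :=
  cokernel (Subobject.ofLE W Y h)

/-- A composition series of `X`: a bicomplete subobject chain all of whose subfactors
`Y/Y⁻_Δ` (for `Y ∈ Δ` with `Y ≠ Y⁻_Δ`) are simple. -/
def IsCompSeries (Δ : Set (Subobject X)) : Prop :=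
  IsSubChain Δ ∧ Bicomplete Δ ∧
    ∀ Y ∈ Δ, ∀ (W) (h : W ≤ Y), IsPred Δ Y W → W ≠ Y → Simple (quot W Y h)

variable (X) in
/-- Axiom (JHS1): `X` is subobject cocomplete. -/
def JHS1 : Prop :=
  ∀ Δ : Set (Subobject X), IsPreChain Δ → ∃ W, IsColimSub Δ W

variable (X) in
/-- Axiom (JHS2): `X` is subobject complete. -/
def JHS2 : Prop :=
  ∀ Δ : Set (Subobject X), IsPreChain Δ → ∃ W, IsLimSub Δ W

variable (X) in
/-- Axiom (JHS3). -/
def JHS3 : Prop :=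
  JHS1 X ∧ ∀ (Δ : Set (Subobject X)) (Z W : Subobject X),
    IsPreChain Δ → IsColimSub Δ W → IsColimSub ((· ⊓ Z) '' Δ) (W ⊓ Z)

variable (X) in
/-- Axiom (JHS4). -/
def JHS4 : Prop :=
  JHS2 X ∧ ∀ (Δ : Set (Subobject X)) (Z W : Subobject X),
    IsPreChain Δ → IsLimSub Δ W → IsLimSub ((· ⊔ Z) '' Δ) (W ⊔ Z)

variable (X) in
/-- `X` is weakly Jordan–Hölder–Schreier. -/
def WeaklyJHS : Prop :=
  JHS3 X ∧ JHS4 X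

variable (X) in
/-- Axiom (JHS5): if `X ≠ 0`, every composition series of `X` has a nonempty subfactor
multiset. -/
def JHS5 : Prop :=
  ¬ IsZero X → ∀ Δ : Set (Subobject X), IsCompSeries Δ →
    ∃ Y ∈ Δ, ∃ W, IsPred Δ Y W ∧ W ≠ Y

variable (X) in
/-- `X` is Jordan–Hölder–Schreier. -/
def IsJHS : Prop :=
  WeaklyJHS X ∧ JHS5 X

/-- The index set of the lower subfactor multiset `sf⁻(Δ)`: elements `Y ∈ Δ` admitting a
predecessor `Y⁻_Δ ≠ Y`. -/
def lowerIdx (Δ : Set (Subobject X)) : Type _ :=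
  {Y : Subobject X // Y ∈ Δ ∧ ∃ W, IsPred Δ Y W ∧ W ≠ Y}

/-- The index set of the upper subfactor multiset `sf⁺(Δ)`: elements `Y ∈ Δ` admitting a
successor `Y⁺_Δ ≠ Y`. -/
def upperIdx (Δ : Set (Subobject X)) : Type _ :=
  {Y : Subobject X // Y ∈ Δ ∧ ∃ W, IsSucc Δ Y W ∧ W ≠ Y}

/-- Subfactor equivalence of two chains: a bijection of the index sets of their subfactor
multisets under which corresponding subfactors are isomorphic. -/
def SubfactorEquiv (Δ Γ : Set (Subobject X)) : Prop :=
  ∃ e : lowerIdx Δ ≃ lowerIdx Γ,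
    ∀ (Y : lowerIdx Δ) (W : Subobject X) (hW : W ≤ Y.1) (V : Subobject X)
      (hV : V ≤ (e Y).1),
      IsPred Δ Y.1 W → IsPred Γ (e Y).1 V →
      Nonempty (quot W Y.1 hW ≅ quot V (e Y).1 hV)

/-- The lower conflation `con⁻(Δ, Γ)`. -/
def conLower (Δ Γ : Set (Subobject X)) : Set (Subobject X) :=
  Δ ∪ {V | ∃ Y ∈ Δ, ∃ Z ∈ Γ, ∃ W, IsPred Δ Y W ∧ V = W ⊔ (Y ⊓ Z)}

/-- The upper conflation `con⁺(Δ, Γ)`. -/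
def conUpper (Δ Γ : Set (Subobject X)) : Set (Subobject X) :=
  Δ ∪ {V | ∃ Y ∈ Δ, ∃ Z ∈ Γ, ∃ W, IsSucc Δ Y W ∧ V = Y ⊔ (W ⊓ Z)}

/-- The cocone over the diagram of a chain of subobjects of `X` with vertex `X` itself,
whose legs are the subobject inclusions.  The induced morphism `colim Δ ⟶ X` is the
canonical comparison map. -/
noncomputable def coconeToX (Δ : Set (Subobject X)) : Cocone (chainDiagram Δ) where
  pt := X
  ι :=
    { app := fun Y => Y.1.arrow
      naturality := fun Y Z f => by simp [chainDiagram, Subobject.ofLE_arrow] }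

/-- The diagram in `𝒜` associated to a monotone family of subobjects of `X`. -/
noncomputable def monoDiagram {J : Type w} [Preorder J] (Y : J →o Subobject X) : J ⥤ 𝒜 where
  obj j := (Y j : 𝒜)
  map {j k} f := Subobject.ofLE _ _ (Y.monotone (leOfHom f))
  map_id j := Subobject.ofLE_refl _
  map_comp {j k l} f g := (Subobject.ofLE_comp_ofLE _ _ _ _ _).symm

/-- The natural transformation of diagrams induced by a pointwise inequality of monotone
families of subobjects of `X` (a "directed system in `Sub(X)`"). -/
noncomputable def monoNatTrans {J : Type w} [Preorder J] (Y Z : J →o Subobject X)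
    (h : ∀ j, Y j ≤ Z j) : monoDiagram Y ⟶ monoDiagram Z where
  app j := Subobject.ofLE _ _ (h j)
  naturality j k f := by simp [monoDiagram, Subobject.ofLE_comp_ofLE]

variable (X) in
/-- Condition (1) of Lemma 4.6: `X` is subobject cocomplete, i.e. for every pre-subobject
chain `Δ` of `X` the induced morphism `colim Δ ⟶ X` is a monomorphism. -/
def Cond1 (hex : ∀ Δ : Set (Subobject X), IsPreChain Δ → HasColimit (chainDiagram Δ)) :
    Prop :=
  ∀ (Δ : Set (Subobject X)) (hΔ : IsPreChain Δ),
    Mono (@colimit.desc _ _ _ _ (chainDiagram Δ) (hex Δ hΔ) (coconeToX Δ))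

variable (X) in
/-- Condition (2) of Lemma 4.6: for every directed system `{f_α : Y_α ⟶ Z_α}` in `Sub(X)`,
the colimit morphism, computed in `𝒜`, is a monomorphism. -/
def Cond2 : Prop :=
  ∀ (J : Type (max u v)) (_ : Preorder J) (_ : IsDirected J (· ≤ ·))
    (Y Z : J →o Subobject X) (h : ∀ j, Y j ≤ Z j)
    (hY : HasColimit (monoDiagram Y)) (hZ : HasColimit (monoDiagram Z)),
    Mono (@colimMap _ _ _ _ (monoDiagram Z) (monoDiagram Y) hZ hY (monoNatTrans Y Z h))

variable (X) in
/-- Condition (3) of Lemma 4.6: for every directed system of short exact sequences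
`0 → Y_α → Z_α → W_α → 0` whose monomorphisms form a directed system in `Sub(X)`,
the colimit `colim W_α` exists and the colimit sequence is short exact. -/
def Cond3 : Prop :=
  ∀ (J : Type (max u v)) (_ : Preorder J) (_ : IsDirected J (· ≤ ·))
    (Y Z : J →o Subobject X) (h : ∀ j, Y j ≤ Z j)
    (W : J ⥤ 𝒜) (g : monoDiagram Z ⟶ W)
    (hw : ∀ j, (monoNatTrans Y Z h).app j ≫ g.app j = 0)
    (_ : ∀ j, (ShortComplex.mk ((monoNatTrans Y Z h).app j) (g.app j) (hw j)).ShortExact)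
    (hY : HasColimit (monoDiagram Y)) (hZ : HasColimit (monoDiagram Z)),
    ∃ hW : HasColimit W,
      ∃ hzero : @colimMap _ _ _ _ (monoDiagram Z) (monoDiagram Y) hZ hY
            (monoNatTrans Y Z h) ≫
          @colimMap _ _ _ _ W (monoDiagram Z) hW hZ g = 0,
        (ShortComplex.mk _ _ hzero).ShortExact


/-! ### Auxiliary constructions -/

open ZeroObject

/-- The canonical cocone on `monoDiagram Y` given by an upper bound `W`. -/
@[simps]
noncomputable def mCocone {J : Type*} [Preorder J] (Y : J →o Subobject X)
    (W : Subobject X) (h : ∀ j, Y j ≤ W) : Cocone (monoDiagram Y) where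
  pt := (W : 𝒜)
  ι :=
    { app := fun j => Subobject.ofLE _ _ (h j)
      naturality := fun j k f => by
        simp [monoDiagram, Subobject.ofLE_comp_ofLE] }

/-- The cocone on `monoDiagram Y` with vertex `X` and legs the subobject arrows. -/
@[simps]
noncomputable def mCoconeX {J : Type*} [Preorder J] (Y : J →o Subobject X) :
    Cocone (monoDiagram Y) where
  pt := X
  ι :=
    { app := fun j => (Y j).arrow
      naturality := fun j k f => by
        simp [monoDiagram, Subobject.ofLE_arrow] }

/-- The colimit of the directed system `Y` exists and is a subobject of `X`. -/
def DirSub {J : Type*} [Preorder J] (Y : J →o Subobject X) : Prop :=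
  ∃ (W : Subobject X) (h : ∀ j, Y j ≤ W), Nonempty (IsColimit (mCocone Y W h))

lemma le_of_isColimit_mCocone {J : Type*} [Preorder J] {Y : J →o Subobject X}
    {W : Subobject X} {h : ∀ j, Y j ≤ W} (t : IsColimit (mCocone Y W h))
    (U : Subobject X) (hU : ∀ j, Y j ≤ U) : W ≤ U := by
  refine Subobject.le_of_comm (t.desc (mCocone Y U hU)) (t.hom_ext fun j => ?_)
  erw [← Category.assoc, t.fac]
  erw [Subobject.ofLE_arrow, Subobject.ofLE_arrow]

/-- A directed system with a top index has its top value as colimit. -/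
lemma dirSub_of_top {J : Type*} [Preorder J] (Y : J →o Subobject X)
    (m : J) (hm : ∀ j, j ≤ m) : DirSub Y := by
  refine ⟨Y m, fun j => Y.monotone (hm j), ⟨?_⟩⟩
  refine
    { desc := fun s => s.ι.app m
      fac := fun s j => ?_
      uniq := fun s f hf => ?_ }
  · exact s.w (homOfLE (hm j))
  · have h2 := hf m
    simp only [mCocone_ι_app] at h2
    rw [Subobject.ofLE_refl] at h2
    exact (Category.id_comp f).symm.trans h2

/-- A directed system over an empty index has `⊥` as colimit. -/
lemma dirSub_of_isEmpty {J : Type*} [Preorder J] [IsEmpty J] (Y : J →o Subobject X) :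
    DirSub Y := by
  have hz : IsZero ((⊥ : Subobject X) : 𝒜) :=
    (isZero_zero 𝒜).of_iso Subobject.botCoeIsoZero
  refine ⟨⊥, fun j => isEmptyElim j, ⟨?_⟩⟩
  exact
    { desc := fun s => 0
      fac := fun s j => isEmptyElim j
      uniq := fun s f hf => hz.eq_of_src f 0 }

/-- Under (Cond1), every chain (indexed by a totally ordered type) of subobjects has a
least upper bound which is the colimit of the chain. -/
lemma dirSub_of_chain
    (hex : ∀ Δ : Set (Subobject X), IsPreChain Δ → HasColimit (chainDiagram Δ))
    (h1 : Cond1 X hex) {P : Type*} [Preorder P]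
    (htot : ∀ p q : P, p ≤ q ∨ q ≤ p) (V : P →o Subobject X) : DirSub V := by
  classical
  have hΔ : IsPreChain (Set.range V) := by
    intro a ha b hb hne
    obtain ⟨p, rfl⟩ := ha
    obtain ⟨q, rfl⟩ := hb
    rcases htot p q with h | h
    · exact Or.inl (V.monotone h)
    · exact Or.inr (V.monotone h)
  haveI := hex (Set.range V) hΔ
  haveI : Mono (colimit.desc (chainDiagram (Set.range V)) (coconeToX (Set.range V))) :=
    h1 (Set.range V) hΔ
  set Δ : Set (Subobject X) := Set.range V
  haveI hmonoΔ : Mono (colimit.desc (chainDiagram Δ) (coconeToX Δ)) := h1 Δ hΔ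
  let Vt : Subobject X := @Subobject.mk _ _ _ _ (colimit.desc (chainDiagram Δ) (coconeToX Δ)) hmonoΔ
  have hub : ∀ e ∈ Δ, e ≤ Vt := by
    intro e he
    refine Subobject.le_of_comm
      (colimit.ι (chainDiagram Δ) ⟨e, he⟩ ≫
        (Subobject.underlyingIso (colimit.desc (chainDiagram Δ) (coconeToX Δ))).inv) ?_
    erw [Category.assoc, Subobject.underlyingIso_arrow, colimit.ι_desc]
    rfl
  have tΔ : IsColimit (chainCocone Δ Vt hub) := by
    refine (colimit.isColimit (chainDiagram Δ)).ofIsoColimit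
      (Cocones.ext (Subobject.underlyingIso
        (colimit.desc (chainDiagram Δ) (coconeToX Δ))).symm fun e => ?_)
    erw [← cancel_mono Vt.arrow, Category.assoc, Iso.symm_hom, Subobject.underlyingIso_arrow]
    simp [coconeToX]
    exact (Subobject.ofLE_arrow _).symm
  haveI : IsDirected P (· ≤ ·) :=
    ⟨fun p q => (htot p q).elim (fun h => ⟨q, h, le_rfl⟩) (fun h => ⟨p, le_rfl, h⟩)⟩
  let π : P ⥤ Δ :=
    { obj := fun p => ⟨V p, ⟨p, rfl⟩⟩
      map := fun {p q} f => homOfLE (V.monotone (leOfHom f)) }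
  haveI : π.Final := by
    refine Functor.final_of_exists_of_isFiltered π (fun e => ?_) (fun {e p} s s' => ?_)
    · obtain ⟨p, hp⟩ := e.2
      exact ⟨p, ⟨homOfLE (show e ≤ ⟨V p, ⟨p, rfl⟩⟩ from hp.ge)⟩⟩
    · exact ⟨p, 𝟙 p, Subsingleton.elim _ _⟩
  have hle : ∀ p, V p ≤ Vt := fun p => hub (V p) ⟨p, rfl⟩
  refine ⟨Vt, hle, ⟨?_⟩⟩
  exact (Functor.Final.isColimitWhiskerEquiv π (chainCocone Δ Vt hub)).symm tΔ

lemma restrictHom_mono {J : Type*} [Preorder J] (Y : J →o Subobject X) (S : Set J) :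
    Monotone (fun x : S => Y x.1) := fun _ _ h => Y.monotone h

/-- Restriction of a monotone family of subobjects to a subset of the index set. -/
def restrictHom {J : Type*} [Preorder J] (Y : J →o Subobject X) (S : Set J) :
    S →o Subobject X :=
  ⟨fun x => Y x.1, restrictHom_mono Y S⟩

/-- Combination lemma: if the index set is covered by a monotone (over a totally ordered
parameter set) family of subsets for which the subobject colimit exists, then the subobject
colimit over the whole index set exists. -/
lemma dirSub_comb
    (hex : ∀ Δ : Set (Subobject X), IsPreChain Δ → HasColimit (chainDiagram Δ))
    (h1 : Cond1 X hex) {J : Type*} [Preorder J] (Y : J →o Subobject X)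
    {P : Type*} [Preorder P] (htot : ∀ p q : P, p ≤ q ∨ q ≤ p)
    (D : P → Set J) (hD : Monotone D) (hcov : ∀ j, ∃ p, j ∈ D p)
    (hsub : ∀ p, DirSub (restrictHom Y (D p))) : DirSub Y := by
  classical
  choose W hW tW using hsub
  have tW' : ∀ p, IsColimit (mCocone (restrictHom Y (D p)) (W p) (hW p)) :=
    fun p => (tW p).some
  have hWmono : Monotone W := by
    intro p q hpq
    exact le_of_isColimit_mCocone (tW' p) (W q) (fun x => hW q ⟨x.1, hD hpq x.2⟩)
  obtain ⟨Vt, hle, ⟨tV⟩⟩ := dirSub_of_chain hex h1 htot ⟨W, hWmono⟩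
  have hleY : ∀ j, Y j ≤ Vt := by
    intro j
    obtain ⟨p, hp⟩ := hcov j
    exact (hW p ⟨j, hp⟩).trans (hle p)
  -- For any cocone `s` on `monoDiagram Y`, its restriction to `D p`.
  let scoc : Cocone (monoDiagram Y) → ∀ p : P, Cocone (monoDiagram (restrictHom Y (D p))) :=
    fun s p =>
      { pt := s.pt
        ι :=
          { app := fun x => s.ι.app x.1
            naturality := fun x y f => by
              simpa [monoDiagram, restrictHom] using
                s.w (homOfLE (Subtype.coe_le_coe.mpr (leOfHom f))) } }
  let dd : ∀ (s : Cocone (monoDiagram Y)) (p : P), (W p : 𝒜) ⟶ s.pt :=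
    fun s p => (tW' p).desc (scoc s p)
  have hdd : ∀ (s : Cocone (monoDiagram Y)) (p : P) (x : D p),
      Subobject.ofLE _ _ (hW p x) ≫ dd s p = s.ι.app x.1 :=
    fun s p x => (tW' p).fac (scoc s p) x
  -- The induced cocone on the chain of the `W p`.
  let pcoc : Cocone (monoDiagram Y) → Cocone (monoDiagram ⟨W, hWmono⟩) := fun s =>
    { pt := s.pt
      ι :=
        { app := fun p => dd s p
          naturality := fun p q f => by
            refine (tW' p).hom_ext fun x => ?_
            have h1x := hdd s p x
            have h2x := hdd s q ⟨x.1, hD (leOfHom f) x.2⟩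
            simp only [mCocone_ι_app, Functor.const_obj_obj, Functor.const_obj_map,
              Category.comp_id] at *
            erw [Category.comp_id]
            show Subobject.ofLE _ _ _ ≫ Subobject.ofLE _ _ _ ≫ dd s q = _ ≫ dd s p
            rw [← Category.assoc, Subobject.ofLE_comp_ofLE, h1x]
            exact h2x } }
  refine ⟨Vt, hleY, ⟨?_⟩⟩
  refine
    { desc := fun s => tV.desc (pcoc s)
      fac := fun s j => ?_
      uniq := fun s f hf => ?_ }
  · obtain ⟨p, hp⟩ := hcov j
    have h3 : Subobject.ofLE _ _ (hleY j) =
        Subobject.ofLE _ _ (hW p ⟨j, hp⟩) ≫ Subobject.ofLE _ _ (hle p) :=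
      (Subobject.ofLE_comp_ofLE _ _ _ _ _).symm
    have h4 := tV.fac (pcoc s) p
    have h5 := hdd s p ⟨j, hp⟩
    simp only [mCocone_ι_app, OrderHom.coe_mk, restrictHom] at h3 h4 h5 ⊢
    erw [h3, Category.assoc, h4]
    exact h5
  · refine tV.hom_ext fun p => ?_
    rw [tV.fac (pcoc s) p]
    refine (tW' p).hom_ext fun x => ?_
    have hfx := hf x.1
    have h5 := hdd s p x
    simp only [mCocone_ι_app, OrderHom.coe_mk, restrictHom] at hfx h5 ⊢
    erw [← Category.assoc, Subobject.ofLE_comp_ofLE, hfx]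
    exact h5.symm

section Closure

variable {K : Type*}

/-- Iterates of the closure of a set under a binary operation. -/
def ubcl (u : K → K → K) (S : Set K) : ℕ → Set K
  | 0 => S
  | n + 1 => ubcl u S n ∪ Set.image2 u (ubcl u S n) (ubcl u S n)

/-- The closure of a set under a binary operation. -/
def ubclosure (u : K → K → K) (S : Set K) : Set K :=
  ⋃ n, ubcl u S n

lemma ubcl_mono (u : K → K → K) (S : Set K) : Monotone (ubcl u S) :=
  monotone_nat_of_le_succ fun _ => Set.subset_union_left

lemma subset_ubclosure (u : K → K → K) (S : Set K) : S ⊆ ubclosure u S :=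
  Set.subset_iUnion (ubcl u S) 0

lemma ubclosure_mono (u : K → K → K) : Monotone (ubclosure u) := by
  intro S T hST
  refine Set.iUnion_mono fun n => ?_
  induction n with
  | zero => exact hST
  | succ n ih => exact Set.union_subset_union ih (Set.image2_subset ih ih)

lemma op_mem_ubclosure (u : K → K → K) (S : Set K) {a b : K}
    (ha : a ∈ ubclosure u S) (hb : b ∈ ubclosure u S) : u a b ∈ ubclosure u S := by
  obtain ⟨n, hn⟩ := Set.mem_iUnion.mp ha
  obtain ⟨m, hm⟩ := Set.mem_iUnion.mp hb
  refine Set.mem_iUnion.mpr ⟨max n m + 1, Or.inr ?_⟩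
  exact Set.mem_image2_of_mem (ubcl_mono u S (le_max_left n m) hn)
    (ubcl_mono u S (le_max_right n m) hm)

lemma mk_ubclosure_le (u : K → K → K) (S : Set K) :
    Cardinal.mk (ubclosure u S) ≤ max (Cardinal.mk S) Cardinal.aleph0 := by
  set c := max (Cardinal.mk S) Cardinal.aleph0 with hc
  have hac : Cardinal.aleph0 ≤ c := le_max_right _ _
  have hstep : ∀ n, Cardinal.mk (ubcl u S n) ≤ c := by
    intro n
    induction n with
    | zero => exact le_max_left _ _
    | succ n ih =>
      calc Cardinal.mk (ubcl u S (n + 1)) ≤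
          Cardinal.mk (ubcl u S n) + Cardinal.mk (Set.image2 u (ubcl u S n) (ubcl u S n)) :=
            Cardinal.mk_union_le _ _
        _ ≤ c + c * c := by
            refine add_le_add ih (Cardinal.mk_image2_le.trans (mul_le_mul' ih ih))
        _ = c := by rw [Cardinal.mul_eq_self hac, Cardinal.add_eq_self hac]
  have := Cardinal.mk_iUnion_le_lift (f := ubcl u S)
  rw [Cardinal.lift_uzero] at this
  refine this.trans ?_
  have h1 : Cardinal.lift.{_} (Cardinal.mk ℕ) = Cardinal.aleph0 := by
    simp [Cardinal.mk_nat]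
  calc Cardinal.lift (Cardinal.mk ℕ) * ⨆ n, Cardinal.lift.{0} (Cardinal.mk (ubcl u S n)) ≤
      Cardinal.aleph0 * c := by
        rw [h1]
        refine mul_le_mul' le_rfl (ciSup_le' fun n => ?_)
        rw [Cardinal.lift_uzero]
        exact hstep n
    _ ≤ c * c := mul_le_mul' hac le_rfl
    _ = c := Cardinal.mul_eq_self hac

end Closure

/-- Under (Cond1), every directed system of subobjects has a colimit which is a subobject. -/
lemma dirSub_all
    (hex : ∀ Δ : Set (Subobject X), IsPreChain Δ → HasColimit (chainDiagram Δ))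
    (h1 : Cond1 X hex) (κ : Cardinal.{max u v}) :
    ∀ (J : Type (max u v)) [Preorder J] [IsDirected J (· ≤ ·)]
      (Y : J →o Subobject X), Cardinal.mk J = κ → DirSub Y := by
  refine WellFounded.induction Cardinal.lt_wf
    (C := fun κ => ∀ (J : Type (max u v)) [Preorder J] [IsDirected J (· ≤ ·)]
      (Y : J →o Subobject X), Cardinal.mk J = κ → DirSub Y) κ ?_
  clear κ
  intro κ IH J _pre _dir Y hκ
  subst hκ
  rcases isEmpty_or_nonempty J with hJ | hJ
  · exact dirSub_of_isEmpty Y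
  by_cases htop : ∃ m : J, ∀ j : J, j ≤ m
  · obtain ⟨m, hm⟩ := htop
    exact dirSub_of_top Y m hm
  have hinf : Infinite J := by
    rw [← not_finite_iff_infinite]
    intro hfin
    haveI := Fintype.ofFinite J
    obtain ⟨m, hm⟩ := Finset.exists_le (Finset.univ : Finset J)
    exact htop ⟨m, fun j => hm j (Finset.mem_univ j)⟩
  have u_spec := fun a b : J => directed_of (· ≤ ·) a b
  choose u hu1 hu2 using u_spec
  by_cases hcnt : Cardinal.mk J ≤ Cardinal.aleph0
  · -- countable case: there is a cofinal chain
    haveI : Countable J := Cardinal.mk_le_aleph0_iff.mp hcnt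
    obtain ⟨dJ⟩ := nonempty_denumerable J
    let e : ℕ ≃ J := (Denumerable.eqv J).symm
    let m : ℕ → J := fun n => Nat.rec (motive := fun _ => J) (e 0) (fun k mk => u mk (e (k + 1))) n
    have hmono : Monotone m := monotone_nat_of_le_succ fun n => hu1 _ _
    have hem : ∀ n, e n ≤ m n := by
      intro n
      cases n with
      | zero => exact le_rfl
      | succ k => exact hu2 _ _
    refine dirSub_comb hex h1 Y (fun p q : ℕ => le_total p q)
      (fun n => {j | j ≤ m n}) ?_ ?_ ?_
    · intro a b hab j hj
      exact le_trans hj (hmono hab)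
    · intro j
      refine ⟨e.symm j, ?_⟩
      have := hem (e.symm j)
      rwa [e.apply_symm_apply] at this
    · intro n
      exact dirSub_of_top _ ⟨m n, le_rfl⟩ fun x => x.2
  · -- uncountable case
    push_neg at hcnt
    let P : Type (max u v) := (Cardinal.mk J).ord.ToType
    haveI hwo : IsWellOrder P (· < ·) := isWellOrder_lt
    have hPJ : Cardinal.mk P = Cardinal.mk J := Cardinal.mk_ord_toType _
    obtain ⟨e⟩ := Cardinal.eq.mp hPJ
    refine dirSub_comb hex h1 Y (fun p q : P => le_total p q)
      (fun p => ubclosure u (e '' Set.Iic p)) ?_ ?_ ?_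
    · intro p q hpq
      exact ubclosure_mono u (Set.image_mono (Set.Iic_subset_Iic.mpr hpq))
    · intro j
      exact ⟨e.symm j,
        subset_ubclosure u _ ⟨e.symm j, Set.mem_Iic.mpr le_rfl, e.apply_symm_apply j⟩⟩
    · intro p
      haveI hdir : IsDirected (ubclosure u (e '' Set.Iic p) : Set J) (· ≤ ·) :=
        ⟨fun a b => ⟨⟨u a b, op_mem_ubclosure u _ a.2 b.2⟩, hu1 _ _, hu2 _ _⟩⟩
      refine IH (Cardinal.mk (ubclosure u (e '' Set.Iic p))) ?_ _ _ rfl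
      have hIio : Cardinal.mk (Set.Iio p) < Cardinal.mk J := by
        have hlt := Cardinal.card_typein_toType_lt (Cardinal.mk J) p
        have hq := Ordinal.card_typein (r := ((· < ·) : P → P → Prop)) p
        rw [hq] at hlt
        exact hlt
      have hIic : Cardinal.mk (Set.Iic p) < Cardinal.mk J := by
        have hsub : Set.Iic p ⊆ insert p (Set.Iio p) := by
          intro q hq
          rcases lt_or_eq_of_le (Set.mem_Iic.mp hq) with h | h
          · exact Set.mem_insert_iff.mpr (Or.inr h)
          · exact Set.mem_insert_iff.mpr (Or.inl h)
        refine lt_of_le_of_lt ((Cardinal.mk_le_mk_of_subset hsub).trans Cardinal.mk_insert_le) ?_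
        exact Cardinal.add_lt_of_lt hcnt.le hIio (lt_trans Cardinal.one_lt_aleph0 hcnt)
      calc Cardinal.mk (ubclosure u (e '' Set.Iic p)) ≤
          max (Cardinal.mk (e '' Set.Iic p)) Cardinal.aleph0 := mk_ubclosure_le u _
        _ < Cardinal.mk J := max_lt (lt_of_le_of_lt Cardinal.mk_image_le hIic) hcnt

lemma cond1_to_cond2
    (hex : ∀ Δ : Set (Subobject X), IsPreChain Δ → HasColimit (chainDiagram Δ))
    (h1 : Cond1 X hex) : Cond2 X := by
  intro J pre dir Y Z h hY hZ
  obtain ⟨Wy, hy, ⟨ty⟩⟩ := dirSub_all hex h1 (Cardinal.mk J) J Y rfl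
  obtain ⟨Wz, hz, ⟨tz⟩⟩ := dirSub_all hex h1 (Cardinal.mk J) J Z rfl
  haveI := hY
  haveI := hZ
  have hdz : colimit.desc (monoDiagram Z) (mCoconeX Z) =
      (colimit.isoColimitCocone ⟨_, tz⟩).hom ≫ Wz.arrow := by
    refine colimit.hom_ext fun j => ?_
    erw [colimit.ι_desc, ← Category.assoc, colimit.isoColimitCocone_ι_hom]
    simp
    exact (Subobject.ofLE_arrow _).symm
  have hdy : colimit.desc (monoDiagram Y) (mCoconeX Y) =
      (colimit.isoColimitCocone ⟨_, ty⟩).hom ≫ Wy.arrow := by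
    refine colimit.hom_ext fun j => ?_
    erw [colimit.ι_desc, ← Category.assoc, colimit.isoColimitCocone_ι_hom]
    simp
    exact (Subobject.ofLE_arrow _).symm
  haveI hmz : Mono (colimit.desc (monoDiagram Z) (mCoconeX Z)) := by
    rw [hdz]; exact @mono_comp _ _ _ _ _ _ _ _ (Subobject.arrow_mono Wz)
  haveI hmy : Mono (colimit.desc (monoDiagram Y) (mCoconeX Y)) := by
    rw [hdy]; exact @mono_comp _ _ _ _ _ _ _ _ (Subobject.arrow_mono Wy)
  have hcomp : colimMap (monoNatTrans Y Z h) ≫ colimit.desc (monoDiagram Z) (mCoconeX Z) =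
      colimit.desc (monoDiagram Y) (mCoconeX Y) := by
    refine colimit.hom_ext fun j => ?_
    erw [← Category.assoc, ι_colimMap, Category.assoc, colimit.ι_desc, colimit.ι_desc]
    simp [monoNatTrans]
    exact Subobject.ofLE_arrow _
  exact @mono_of_mono_fac _ _ _ _ _ _ _ _ hmy hcomp

lemma cond2_to_cond1
    (hex : ∀ Δ : Set (Subobject X), IsPreChain Δ → HasColimit (chainDiagram Δ))
    (h2 : Cond2 X) : Cond1 X hex := by
  intro Δ hΔ
  haveI := hex Δ hΔ
  rcases isEmpty_or_nonempty Δ with hE | hNE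
  · -- empty chain: the colimit is a zero object
    let c0 : Cocone (chainDiagram Δ) :=
      { pt := 0
        ι :=
          { app := fun j => (hE.false j).elim
            naturality := fun j _ _ => (hE.false j).elim } }
    have t0 : IsColimit c0 :=
      { desc := fun s => 0
        fac := fun s j => (hE.false j).elim
        uniq := fun s f _ => by apply (isZero_zero 𝒜).eq_of_src }
    have hz : IsZero (colimit (chainDiagram Δ)) :=
      (isZero_zero 𝒜).of_iso (colimit.isoColimitCocone ⟨c0, t0⟩)
    exact ⟨fun g h _ => hz.eq_of_tgt g h⟩
  · obtain ⟨⟨e0, he0⟩⟩ := hNE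
    haveI : IsDirected (↥Δ) (· ≤ ·) := by
      refine ⟨fun a b => ?_⟩
      rcases eq_or_ne a b with rfl | hne
      · exact ⟨a, le_rfl, le_rfl⟩
      · rcases hΔ a.2 b.2 (Subtype.coe_ne_coe.mpr hne) with hab | hab
        · exact ⟨b, Subtype.coe_le_coe.mp hab, le_rfl⟩
        · exact ⟨a, le_rfl, Subtype.coe_le_coe.mp hab⟩
    let valY : ↥Δ →o Subobject X := ⟨Subtype.val, fun {_ _} hh => hh⟩
    let Ztop : ↥Δ →o Subobject X := ⟨fun _ => ⊤, monotone_const⟩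
    haveI hYcol : HasColimit (monoDiagram valY) := hex Δ hΔ
    -- the colimit of the constant-`⊤` diagram is `X`
    let cT : Cocone (monoDiagram Ztop) :=
      { pt := X
        ι :=
          { app := fun _ => (⊤ : Subobject X).arrow
            naturality := fun j k f => by
              simp [monoDiagram, Ztop, Subobject.ofLE_arrow] } }
    have hconst : ∀ (s : Cocone (monoDiagram Ztop)) (j k : ↥Δ) (hjk : j ≤ k),
        s.ι.app j = s.ι.app k := by
      intro s j k hjk
      have h1 := s.w (homOfLE hjk)
      rw [show (monoDiagram Ztop).map (homOfLE hjk) = 𝟙 _ from Subobject.ofLE_refl ⊤] at h1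
      exact ((Category.id_comp (s.ι.app k)).symm.trans h1).symm
    have hfull : ∀ (s : Cocone (monoDiagram Ztop)) (j k : ↥Δ), s.ι.app j = s.ι.app k := by
      intro s j k
      obtain ⟨l, hjl, hkl⟩ := directed_of (· ≤ ·) j k
      rw [hconst s j l hjl, hconst s k l hkl]
    let tT : IsColimit cT :=
      { desc := fun s => inv ((⊤ : Subobject X).arrow) ≫ s.ι.app ⟨e0, he0⟩
        fac := fun s j => by
          show (⊤ : Subobject X).arrow ≫ inv ((⊤ : Subobject X).arrow) ≫ s.ι.app ⟨e0, he0⟩ =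
            s.ι.app j
          erw [IsIso.hom_inv_id_assoc]
          exact hfull s ⟨e0, he0⟩ j
        uniq := fun s f hf => by
          show f = inv ((⊤ : Subobject X).arrow) ≫ s.ι.app ⟨e0, he0⟩
          rw [← hf ⟨e0, he0⟩]
          show f = inv ((⊤ : Subobject X).arrow) ≫ (⊤ : Subobject X).arrow ≫ f
          rw [IsIso.inv_hom_id_assoc] }
    haveI hZcol : HasColimit (monoDiagram Ztop) := HasColimit.mk ⟨cT, tT⟩
    haveI hm : Mono (colimMap (monoNatTrans valY Ztop fun _ => le_top)) :=
      h2 (↥Δ) inferInstance inferInstance valY Ztop (fun _ => le_top) hYcol hZcol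
    have heq : colimit.desc (chainDiagram Δ) (coconeToX Δ) =
        colimMap (monoNatTrans valY Ztop fun _ => le_top) ≫
          (colimit.isoColimitCocone ⟨cT, tT⟩).hom := by
      refine colimit.hom_ext fun j => ?_
      erw [colimit.ι_desc, ← Category.assoc, ι_colimMap, Category.assoc,
        colimit.isoColimitCocone_ι_hom]
      simp [monoNatTrans, cT, coconeToX, valY, Ztop, Subobject.ofLE_arrow]
      exact (Subobject.ofLE_arrow _).symm
    rw [heq]
    exact @mono_comp _ _ _ _ _ _ hm _ (IsIso.mono_of_iso (colimit.isoColimitCocone ⟨cT, tT⟩).hom)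

/-- The pointwise cokernel diagram of a directed system of inclusions in `Sub(X)`. -/
noncomputable def cokerDiagram {J : Type*} [Preorder J] (Y Z : J →o Subobject X)
    (h : ∀ j, Y j ≤ Z j) : J ⥤ 𝒜 where
  obj j := cokernel (Subobject.ofLE _ _ (h j))
  map {j k} f :=
    cokernel.map _ _ (Subobject.ofLE _ _ (Y.monotone (leOfHom f)))
      (Subobject.ofLE _ _ (Z.monotone (leOfHom f)))
      (by rw [Subobject.ofLE_comp_ofLE, Subobject.ofLE_comp_ofLE])
  map_id j := coequalizer.hom_ext (by simp [cokernel.map, Subobject.ofLE_refl])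
  map_comp {j k l} f g := coequalizer.hom_ext (by simp [cokernel.map, Subobject.ofLE_comp_ofLE])

/-- The natural projection onto the pointwise cokernel diagram. -/
noncomputable def cokerNatTrans {J : Type*} [Preorder J] (Y Z : J →o Subobject X)
    (h : ∀ j, Y j ≤ Z j) : monoDiagram Z ⟶ cokerDiagram Y Z h where
  app j := cokernel.π _
  naturality j k f := by
    simp [monoDiagram, cokerDiagram, cokernel.map]

lemma cond3_to_cond2 (h3 : Cond3 X) : Cond2 X := by
  intro J pre dir Y Z h hY hZ
  obtain ⟨hW, hzero, hse⟩ := h3 J pre dir Y Z h (cokerDiagram Y Z h) (cokerNatTrans Y Z h)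
    (fun j => cokernel.condition _)
    (fun j =>
      { exact := ShortComplex.exact_of_g_is_cokernel _ (cokernelIsCokernel _)
        mono_f := (inferInstance : Mono (Subobject.ofLE (Y j) (Z j) (h j)))
        epi_g := (inferInstance : Epi (cokernel.π (Subobject.ofLE (Y j) (Z j) (h j)))) })
    hY hZ
  exact hse.mono_f

lemma cond2_to_cond3 (h2 : Cond2 X) : Cond3 X := by
  intro J pre dir Y Z h W g hw hses hY hZ
  haveI := hY
  haveI := hZ
  haveI : ∀ j, Epi (g.app j) := fun j => (hses j).epi_g
  have hfac : ∀ j, (monoNatTrans Y Z h).app j ≫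
      colimit.ι (monoDiagram Z) j ≫ cokernel.π (colimMap (monoNatTrans Y Z h)) = 0 := by
    intro j
    rw [← Category.assoc, ← ι_colimMap, Category.assoc, cokernel.condition, comp_zero]
  let ℓ : ∀ j, W.obj j ⟶ cokernel (colimMap (monoNatTrans Y Z h)) := fun j =>
    (hses j).exact.desc
      (colimit.ι (monoDiagram Z) j ≫ cokernel.π (colimMap (monoNatTrans Y Z h))) (hfac j)
  have hℓ : ∀ j, g.app j ≫ ℓ j =
      colimit.ι (monoDiagram Z) j ≫ cokernel.π (colimMap (monoNatTrans Y Z h)) := fun j =>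
    (hses j).exact.g_desc _ (hfac j)
  let cW : Cocone W :=
    { pt := cokernel (colimMap (monoNatTrans Y Z h))
      ι :=
        { app := fun j => ℓ j
          naturality := fun j k f => by
            rw [← cancel_epi (g.app j)]
            have hgnat := g.naturality f
            simp only [Functor.const_obj_obj, Functor.const_obj_map, Category.comp_id]
            rw [← Category.assoc, ← hgnat, Category.assoc, hℓ k, hℓ j, ← Category.assoc,
              colimit.w (monoDiagram Z) f] } }
  -- the cocone `cW` is a colimit cocone
  let zc : Cocone W → Cocone (monoDiagram Z) := fun s =>
    { pt := s.pt
      ι :=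
        { app := fun j => g.app j ≫ s.ι.app j
          naturality := fun j k f => by
            have hgnat := g.naturality f
            have hsw := s.w f
            simp only [Functor.const_obj_obj, Functor.const_obj_map, Category.comp_id]
            rw [← Category.assoc, hgnat, Category.assoc, hsw] } }
  have hzc : ∀ s : Cocone W,
      colimMap (monoNatTrans Y Z h) ≫ colimit.desc (monoDiagram Z) (zc s) = 0 := by
    intro s
    refine colimit.hom_ext fun j => ?_
    rw [comp_zero, ← Category.assoc, ι_colimMap, Category.assoc, colimit.ι_desc]
    show (monoNatTrans Y Z h).app j ≫ g.app j ≫ s.ι.app j = 0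
    rw [← Category.assoc, hw j, zero_comp]
  let tW : IsColimit cW :=
    { desc := fun s => cokernel.desc _ (colimit.desc (monoDiagram Z) (zc s)) (hzc s)
      fac := fun s j => by
        show ℓ j ≫ _ = s.ι.app j
        rw [← cancel_epi (g.app j), ← Category.assoc, hℓ j, Category.assoc,
          cokernel.π_desc, colimit.ι_desc]
      uniq := fun s f hf => by
        show f = cokernel.desc _ (colimit.desc (monoDiagram Z) (zc s)) (hzc s)
        rw [← cancel_epi (cokernel.π (colimMap (monoNatTrans Y Z h))), cokernel.π_desc]
        refine colimit.hom_ext fun j => ?_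
        rw [colimit.ι_desc, ← Category.assoc, ← hℓ j, Category.assoc]
        show g.app j ≫ ℓ j ≫ f = (zc s).ι.app j
        rw [hf j] }
  haveI hWcol : HasColimit W := HasColimit.mk ⟨cW, tW⟩
  have hzero : colimMap (monoNatTrans Y Z h) ≫ colimMap g = 0 := by
    refine colimit.hom_ext fun j => ?_
    rw [comp_zero, ← Category.assoc, ι_colimMap, Category.assoc, ι_colimMap,
      ← Category.assoc, hw j, zero_comp]
  refine ⟨hWcol, hzero, ?_⟩
  have hg : colimMap g ≫ (colimit.isoColimitCocone ⟨cW, tW⟩).hom =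
      cokernel.π (colimMap (monoNatTrans Y Z h)) := by
    refine colimit.hom_ext fun j => ?_
    rw [← Category.assoc, ι_colimMap, Category.assoc, colimit.isoColimitCocone_ι_hom]
    exact hℓ j
  have hg' : colimMap g = cokernel.π (colimMap (monoNatTrans Y Z h)) ≫
      (colimit.isoColimitCocone ⟨cW, tW⟩).inv :=
    (Iso.eq_comp_inv _).mpr hg
  haveI hmono : Mono (colimMap (monoNatTrans Y Z h)) := h2 J pre dir Y Z h hY hZ
  have hepi : Epi (colimMap g) := by
    rw [hg']
    exact epi_comp _ _
  refine { exact := ?_, mono_f := hmono, epi_g := hepi }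
  refine ShortComplex.exact_of_g_is_cokernel _ ?_
  refine IsColimit.ofIsoColimit (cokernelIsCokernel (colimMap (monoNatTrans Y Z h)))
    (Cofork.ext (colimit.isoColimitCocone ⟨cW, tW⟩).symm ?_)
  exact hg'.symm

/-- Lemma 4.6: for an object all of whose pre-subobject chains have colimits in `𝒜`,
subobject cocompleteness is equivalent to colimits of directed systems in `Sub(X)` being
monomorphisms, and to exactness of colimits of directed systems of short exact sequences. -/
theorem statement13 [EssentiallySmall.{w} 𝒜] (X : 𝒜)
    (hex : ∀ Δ : Set (Subobject X), IsPreChain Δ → HasColimit (chainDiagram Δ)) :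
    (Cond1 X hex ↔ Cond2 X) ∧ (Cond2 X ↔ Cond3 X) := by
  exact ⟨⟨fun h1 => cond1_to_cond2 hex h1, fun h2 => cond2_to_cond1 hex h2⟩,
    fun h2 => cond2_to_cond3 h2, fun h3 => cond3_to_cond2 h3⟩

end JHS
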